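/- For every integer 1 ≤ k ≤ n, the dual norm of the top-k norm T^(k) on ℝ^n is given by (T^(k))*(w) = max(‖w‖_∞, ‖w‖_1 / k) for all w ∈ ℝ^n. -/

import Mathlib

noncomputable section
open scoped BigOperators

/-- The dual norm `N*(w) = sup {⟨v,w⟩ : N(v) ≤ 1}`. -/
def dualNorm {n : ℕ} (N : (Fin n → ℝ) → ℝ) (w : Fin n → ℝ) : ℝ :=
  sSup {t | ∃ v, N v ≤ 1 ∧ t = ∑ i, v i * w i}

/-- The top-`k` norm: the sum of the `k` largest among `|v₁|, …, |vₙ|`, i.e. the largest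
value of `∑_{i ∈ S} |v i|` over subsets `S` of size `k`. -/
def topkNorm (n k : ℕ) (v : Fin n → ℝ) : ℝ :=
  sSup {t | ∃ S : Finset (Fin n), S.card = k ∧ t = ∑ i ∈ S, |v i|}

lemma topk_bdd {n k : ℕ} (v : Fin n → ℝ) :
    BddAbove {t | ∃ S : Finset (Fin n), S.card = k ∧ t = ∑ i ∈ S, |v i|} :=
  Set.Finite.bddAbove <| (Set.finite_range fun S : Finset (Fin n) => ∑ i ∈ S, |v i|).subset
    (by rintro t ⟨S, -, rfl⟩; exact ⟨S, rfl⟩)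

lemma sum_le_topk {n k : ℕ} (v : Fin n → ℝ) {S : Finset (Fin n)} (hS : S.card = k) :
    ∑ i ∈ S, |v i| ≤ topkNorm n k v :=
  le_csSup (topk_bdd v) ⟨S, hS, rfl⟩

lemma topk_le_one {n k : ℕ} (hkn : k ≤ n) (v : Fin n → ℝ)
    (h : ∀ S : Finset (Fin n), S.card = k → ∑ i ∈ S, |v i| ≤ 1) :
    topkNorm n k v ≤ 1 := by
  obtain ⟨S, -, hS⟩ := Finset.exists_subset_card_eq (s := (Finset.univ : Finset (Fin n)))
    (by simpa using hkn)
  exact csSup_le ⟨_, ⟨S, hS, rfl⟩⟩ (by rintro t ⟨T, hT, rfl⟩; exact h T hT)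

/-- The dual of the top-`k` norm is `w ↦ max(‖w‖_∞, ‖w‖₁ / k)`. -/
theorem topk_dual_norm {n k : ℕ} (hk : 1 ≤ k) (hkn : k ≤ n) (w : Fin n → ℝ) :
    dualNorm (topkNorm n k) w = max (⨆ i, |w i|) ((∑ i, |w i|) / k) := by
  have hn : 0 < n := lt_of_lt_of_le hk hkn
  haveI : Nonempty (Fin n) := ⟨⟨0, hn⟩⟩
  have hk' : (0 : ℝ) < (k : ℝ) := by exact_mod_cast hk
  set A := ⨆ i, |w i| with hA
  set B := (∑ i, |w i|) / k with hB
  set M := max A B with hM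
  have bddW : BddAbove (Set.range fun i => |w i|) := (Set.finite_range _).bddAbove
  have hwleA : ∀ i, |w i| ≤ A := fun i => le_ciSup bddW i
  have hM0 : (0 : ℝ) ≤ M :=
    le_trans (abs_nonneg (w ⟨0, hn⟩)) (le_trans (hwleA _) (le_max_left _ _))
  have hwleM : ∀ i, |w i| ≤ M := fun i => (hwleA i).trans (le_max_left _ _)
  have hsumW : ∑ i, |w i| ≤ k * M := by
    have : B ≤ M := le_max_right _ _
    rw [hB, div_le_iff₀ hk'] at this
    linarith
  -- upper bound
  have key : ∀ v : Fin n → ℝ, topkNorm n k v ≤ 1 → ∑ i, v i * w i ≤ M := by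
    intro v hv
    set a : Fin n → ℝ := fun i => |v i| with ha
    obtain ⟨S₀, hS₀mem, hS₀max⟩ := Finset.exists_max_image
      (Finset.powersetCard k (Finset.univ : Finset (Fin n))) (fun S => ∑ i ∈ S, a i)
      (Finset.powersetCard_nonempty.mpr (by simpa using hkn))
    have hS₀card : S₀.card = k := (Finset.mem_powersetCard.mp hS₀mem).2
    have hS₀ne : S₀.Nonempty := Finset.card_pos.mp (by omega)
    obtain ⟨i₀, hi₀S, hmin⟩ := Finset.exists_min_image S₀ a hS₀ne
    set θ := a i₀ with hθ
    have hθ0 : 0 ≤ θ := abs_nonneg _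
    have hout : ∀ j, j ∉ S₀ → a j ≤ θ := by
      intro j hj
      by_contra hlt
      push_neg at hlt
      have hjne : j ∉ S₀.erase i₀ := fun h => hj (Finset.mem_of_mem_erase h)
      have hswapcard : (insert j (S₀.erase i₀)).card = k := by
        rw [Finset.card_insert_of_notMem hjne, Finset.card_erase_of_mem hi₀S, hS₀card]
        omega
      have hmem : insert j (S₀.erase i₀) ∈ Finset.powersetCard k (Finset.univ : Finset (Fin n)) :=
        Finset.mem_powersetCard.mpr ⟨Finset.subset_univ _, hswapcard⟩
      have h1 := hS₀max _ hmem
      rw [Finset.sum_insert hjne] at h1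
      have h2 : ∑ x ∈ S₀.erase i₀, a x + a i₀ = ∑ x ∈ S₀, a x :=
        Finset.sum_erase_add S₀ a hi₀S
      linarith
    have hdecomp : ∀ i, a i = max (a i - θ) 0 + min (a i) θ := by
      intro i
      rcases le_total (a i) θ with h | h
      · rw [max_eq_right (by linarith), min_eq_left h]; ring
      · rw [max_eq_left (by linarith), min_eq_right h]; ring
    have hplus : ∑ i, max (a i - θ) 0 = ∑ i ∈ S₀, (a i - θ) := by
      rw [← Finset.sum_add_sum_compl S₀ (fun i => max (a i - θ) 0)]
      have h1 : ∑ i ∈ S₀, max (a i - θ) 0 = ∑ i ∈ S₀, (a i - θ) :=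
        Finset.sum_congr rfl fun i hi => max_eq_left (by have := hmin i hi; linarith)
      have h2 : ∑ i ∈ S₀ᶜ, max (a i - θ) 0 = 0 :=
        Finset.sum_eq_zero fun i hi =>
          max_eq_right (by have := hout i (Finset.mem_compl.mp hi); linarith)
      rw [h1, h2, add_zero]
    calc ∑ i, v i * w i ≤ ∑ i, a i * |w i| :=
          Finset.sum_le_sum fun i _ => (le_abs_self _).trans (le_of_eq (abs_mul _ _))
      _ = ∑ i, (max (a i - θ) 0 * |w i| + min (a i) θ * |w i|) :=
          Finset.sum_congr rfl fun i _ => by rw [← add_mul, ← hdecomp i]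
      _ = ∑ i, max (a i - θ) 0 * |w i| + ∑ i, min (a i) θ * |w i| :=
          Finset.sum_add_distrib
      _ ≤ ∑ i, max (a i - θ) 0 * M + ∑ i, θ * |w i| := by
          refine add_le_add (Finset.sum_le_sum fun i _ => ?_)
            (Finset.sum_le_sum fun i _ => ?_)
          · exact mul_le_mul_of_nonneg_left (hwleM i) (le_max_right _ _)
          · exact mul_le_mul_of_nonneg_right (min_le_right _ _) (abs_nonneg _)
      _ = M * (∑ i ∈ S₀, (a i - θ)) + θ * ∑ i, |w i| := by
          rw [← Finset.sum_mul, hplus, mul_comm, ← Finset.mul_sum]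
      _ ≤ M * (∑ i ∈ S₀, (a i - θ)) + θ * (k * M) :=
          add_le_add le_rfl (mul_le_mul_of_nonneg_left hsumW hθ0)
      _ = M * (∑ i ∈ S₀, a i) := by
          rw [Finset.sum_sub_distrib, Finset.sum_const, hS₀card, nsmul_eq_mul]
          ring
      _ ≤ M * 1 := mul_le_mul_of_nonneg_left ((sum_le_topk v hS₀card).trans hv) hM0
      _ = M := mul_one M
  -- membership
  have hmemM : M ∈ {t | ∃ v, topkNorm n k v ≤ 1 ∧ t = ∑ i, v i * w i} := by
    rcases le_total B A with hBA | hAB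
    · -- M = A, attained at some i₀
      obtain ⟨i₀, -, hi₀⟩ := Finset.exists_max_image Finset.univ (fun i => |w i|)
        Finset.univ_nonempty
      have hAeq : A = |w i₀| :=
        le_antisymm (ciSup_le fun i => hi₀ i (Finset.mem_univ i)) (hwleA i₀)
      refine ⟨fun i => if i = i₀ then (if w i₀ < 0 then -1 else 1) else 0, ?_, ?_⟩
      · refine topk_le_one hkn _ fun S hS => ?_
        have habs : ∀ i, |if i = i₀ then (if w i₀ < 0 then (-1:ℝ) else 1) else 0|
            = if i = i₀ then 1 else 0 := by
          intro i; split_ifs <;> norm_num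
        simp only [habs]
        rw [Finset.sum_ite_eq' S i₀ (fun _ => (1:ℝ))]
        split_ifs <;> norm_num
      · rw [hM, sup_eq_left.mpr hBA, hAeq]
        dsimp only
        have : ∀ i, (if i = i₀ then (if w i₀ < 0 then (-1:ℝ) else 1) else 0) * w i
            = if i = i₀ then (if w i₀ < 0 then -1 else 1) * w i else 0 := by
          intro i; split_ifs <;> ring
        simp only [this]
        rw [Finset.sum_ite_eq' Finset.univ i₀ (fun i => (if w i₀ < 0 then (-1:ℝ) else 1) * w i)]
        simp only [Finset.mem_univ, if_true]
        split_ifs with h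
        · rw [abs_of_neg h]; ring
        · rw [abs_of_nonneg (not_lt.mp h)]; ring
    · -- M = B
      set s : Fin n → ℝ := fun i => if w i < 0 then -1 else if 0 < w i then 1 else 0 with hs
      have hsabs : ∀ i, |s i| ≤ 1 := by
        intro i; rw [hs]; dsimp only; split_ifs <;> norm_num
      have hsmul : ∀ i, s i * w i = |w i| := by
        intro i; rw [hs]; dsimp only
        split_ifs with h1 h2
        · rw [abs_of_neg h1]; ring
        · rw [abs_of_pos h2]; ring
        · have : w i = 0 := le_antisymm (not_lt.mp h2) (not_lt.mp h1)
          rw [this]; simp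
      refine ⟨fun i => s i / k, ?_, ?_⟩
      · refine topk_le_one hkn _ fun S hS => ?_
        have : ∀ i, |s i / (k : ℝ)| ≤ 1 / k := by
          intro i
          rw [abs_div, abs_of_pos hk']
          gcongr
          exact hsabs i
        calc ∑ i ∈ S, |s i / (k:ℝ)| ≤ ∑ i ∈ S, 1 / (k:ℝ) :=
              Finset.sum_le_sum fun i _ => this i
          _ = k * (1 / k) := by rw [Finset.sum_const, hS, nsmul_eq_mul]
          _ = 1 := by field_simp
      · rw [hM, sup_eq_right.mpr hAB, hB]
        dsimp only
        rw [Finset.sum_div]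
        refine Finset.sum_congr rfl fun i _ => ?_
        rw [← hsmul i]; ring
  have hub : ∀ t ∈ {t | ∃ v, topkNorm n k v ≤ 1 ∧ t = ∑ i, v i * w i}, t ≤ M := by
    rintro t ⟨v, hv, rfl⟩; exact key v hv
  exact le_antisymm (csSup_le ⟨M, hmemM⟩ hub) (le_csSup ⟨M, hub⟩ hmemM)
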